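/- Let $A$ be a unital complex Banach $\star$-algebra with unit $1$, $X$ a complex Banach space, $z \in A$ fixed, and $\phi : A \times A \to X$ a continuous bilinear map such that $\phi(a, b^\star) = \phi(z, 1)$ whenever $a b^\star = z$. Then $\phi(za, a) = \phi(za^2, 1)$ for all $a \in A$. -/

import Mathlib

open NormedSpace

theorem stmt_3 (A X : Type*) [NormedRing A] [NormedAlgebra ℂ A] [CompleteSpace A]
    [StarRing A] [StarModule ℂ A] [ContinuousStar A]
    [NormedAddCommGroup X] [NormedSpace ℂ X] [CompleteSpace X]
    (z : A) (φ : A →L[ℂ] A →L[ℂ] X)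
    (h : ∀ a b : A, a * star b = z → φ a (star b) = φ z 1) :
    ∀ a : A, φ (z * a) a = φ (z * a ^ 2) 1 := by
  -- restate hypothesis without stars
  have h' : ∀ a c : A, a * c = z → φ a c = φ z 1 := by
    intro a c hc
    have := h a (star c) (by simpa using hc)
    simpa using this
  -- the constant function fact
  have hconst : ∀ (b : A) (t : ℂ),
      φ (z * exp (t • b)) (exp (t • (-b))) = φ z 1 := by
    intro b t
    apply h'
    have hcomm : Commute (t • b) (t • (-b)) := by
      simp [(Commute.refl (t • b)).neg_right]
    let +nondep : NormedAlgebra ℚ A := .restrictScalars ℚ ℂ A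
    rw [mul_assoc, ← exp_add_of_commute hcomm]
    simp
  -- derivative of the constant function, for every b and t
  have hD : ∀ (b : A) (t : ℂ),
      φ (z * (exp (t • b) * b)) (exp (t • (-b)))
        + φ (z * exp (t • b)) (exp (t • (-b)) * (-b)) = 0 := by
    intro b t
    have h1 : HasDerivAt (fun s : ℂ => z * exp (s • b)) (z * (exp (t • b) * b)) t :=
      (hasDerivAt_exp_smul_const b t).const_mul z
    have hc : HasDerivAt (fun s : ℂ => φ (z * exp (s • b)))
        (φ (z * (exp (t • b) * b))) t :=
      φ.hasFDerivAt.comp_hasDerivAt t h1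
    have hu : HasDerivAt (fun s : ℂ => exp (s • (-b))) (exp (t • (-b)) * (-b)) t :=
      hasDerivAt_exp_smul_const (-b) t
    have hF : HasDerivAt (fun s : ℂ => φ (z * exp (s • b)) (exp (s • (-b))))
        (φ (z * (exp (t • b) * b)) (exp (t • (-b)))
          + φ (z * exp (t • b)) (exp (t • (-b)) * (-b))) t := hc.clm_apply hu
    have heq : (fun s : ℂ => φ (z * exp (s • b)) (exp (s • (-b))))
        = fun _ : ℂ => φ z 1 := funext fun s => hconst b s
    rw [heq] at hF
    exact ((hasDerivAt_const t (φ z 1)).unique hF).symm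
  -- first-order consequence at t = 0 : φ (z*b) 1 = φ z b
  have E0 : ∀ b : A, φ (z * b) (1 : A) = φ z b := by
    intro b
    have := hD b 0
    simp only [zero_smul, exp_zero, one_mul, mul_one, mul_neg] at this
    have h2 : φ (z * b) 1 - φ z b = 0 := by
      simpa [map_neg, sub_eq_add_neg] using this
    exact sub_eq_zero.mp h2
  -- main statement
  intro a
  -- the identity T1 = T2 for all s
  have hTT : (fun s : ℂ => φ (z * (exp (s • a) * a)) (exp (s • (-a))))
      = fun s : ℂ => φ (z * exp (s • a)) (exp (s • (-a)) * a) := by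
    funext s
    have := hD a s
    have h2 : φ (z * (exp (s • a) * a)) (exp (s • (-a)))
        - φ (z * exp (s • a)) (exp (s • (-a)) * a) = 0 := by
      simpa [mul_neg, map_neg, sub_eq_add_neg] using this
    exact sub_eq_zero.mp h2
  -- derivative of T1 at 0
  have hf1 : HasDerivAt (fun s : ℂ => z * (exp (s • a) * a))
      (z * (exp ((0:ℂ) • a) * a * a)) 0 :=
    ((hasDerivAt_exp_smul_const a 0).mul_const a).const_mul z
  have hc1 : HasDerivAt (fun s : ℂ => φ (z * (exp (s • a) * a)))
      (φ (z * (exp ((0:ℂ) • a) * a * a))) 0 :=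
    φ.hasFDerivAt.comp_hasDerivAt 0 hf1
  have hu1 : HasDerivAt (fun s : ℂ => exp (s • (-a))) (exp ((0:ℂ) • (-a)) * (-a)) 0 :=
    hasDerivAt_exp_smul_const (-a) 0
  have hT1 : HasDerivAt (fun s : ℂ => φ (z * (exp (s • a) * a)) (exp (s • (-a))))
      (φ (z * (exp ((0:ℂ) • a) * a * a)) (exp ((0:ℂ) • (-a)))
        + φ (z * (exp ((0:ℂ) • a) * a)) (exp ((0:ℂ) • (-a)) * (-a))) 0 :=
    hc1.clm_apply hu1
  -- derivative of T2 at 0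
  have hf2 : HasDerivAt (fun s : ℂ => z * exp (s • a)) (z * (exp ((0:ℂ) • a) * a)) 0 :=
    (hasDerivAt_exp_smul_const a 0).const_mul z
  have hc2 : HasDerivAt (fun s : ℂ => φ (z * exp (s • a)))
      (φ (z * (exp ((0:ℂ) • a) * a))) 0 :=
    φ.hasFDerivAt.comp_hasDerivAt 0 hf2
  have hu2 : HasDerivAt (fun s : ℂ => exp (s • (-a)) * a)
      (exp ((0:ℂ) • (-a)) * (-a) * a) 0 :=
    (hasDerivAt_exp_smul_const (-a) 0).mul_const a
  have hT2 : HasDerivAt (fun s : ℂ => φ (z * exp (s • a)) (exp (s • (-a)) * a))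
      (φ (z * (exp ((0:ℂ) • a) * a)) (exp ((0:ℂ) • (-a)) * a)
        + φ (z * exp ((0:ℂ) • a)) (exp ((0:ℂ) • (-a)) * (-a) * a)) 0 :=
    hc2.clm_apply hu2
  rw [hTT] at hT1
  have hder := hT2.unique hT1
  simp only [zero_smul, exp_zero, one_mul, mul_one, mul_neg, neg_mul, map_neg,
    ContinuousLinearMap.neg_apply] at hder
  -- hder : φ (z*a) a - φ z (a*a) = φ (z*(a*a)) 1 - φ (z*a) a  (up to form)
  have hE : φ (z * (a * a)) (1 : A) = φ z (a * a) := E0 (a * a)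
  have hd : φ (z * a) a - φ (z * (a * a)) 1 = φ (z * (a * a)) 1 - φ (z * a) a := by
    rw [← hE] at hder
    simpa [sub_eq_add_neg] using hder
  have h4 : φ (z * a) a + φ (z * a) a = φ (z * (a * a)) 1 + φ (z * (a * a)) 1 :=
    sub_eq_sub_iff_add_eq_add.mp hd
  have key : (2:ℂ) • (φ (z * a) a - φ (z * (a * a)) 1) = 0 := by
    rw [two_smul, sub_add_sub_comm, h4, sub_self]
  have := sub_eq_zero.mp ((smul_eq_zero.mp key).resolve_left two_ne_zero)
  rw [this, pow_two]
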